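/- Let d ≥ 3 and let Ĉ be an invertible 2×2 real matrix with inverse Ĉ^{−1} = (m_{ij})_{i,j≤2}. Suppose ξ_1, ξ_2, η, θ ∈ ℝ with ξ_1 ≠ 0, ξ_2 ≠ 0 are such that the matrix Ñ = diag(ξ_1, ξ_2)·[[1, η],[θ, 1]] satisfies Ñᵀ·Ñ_{d−1} = Ĉ, where Ñ_{d−1} denotes the entrywise (d−1)-st power of Ñ. Then: (i) the matrix [[1, η^{d−1}],[θ^{d−1}, 1]]·Ĉ^{−1}·[[1, η],[θ, 1]]ᵀ equals diag(ξ_1^{−d}, ξ_2^{−d}); (ii) if η^{d−1}·m_{21} + m_{11} ≠ 0 then θ = −(η^{d−1}·m_{22} + m_{12})/(η^{d−1}·m_{21} + m_{11}); (iii) η satisfies (m_{22}·η + m_{21})·(−m_{21}·η^{d−1} − m_{11})^{d−1} + (m_{22}·η^{d−1} + m_{12})^{d−1}·(m_{12}·η + m_{11}) = 0; and (iv) ξ_1^{−d} = [1, η^{d−1}]·Ĉ^{−1}·[1, η]ᵀ and ξ_2^{−d} = [θ^{d−1}, 1]·Ĉ^{−1}·[θ, 1]ᵀ. -/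

import Mathlib

open Matrix

noncomputable section

/-- Entrywise (Hadamard) `k`-th power of a matrix. -/
def entryPow {m n : Type} (M : Matrix m n ℝ) (k : ℕ) : Matrix m n ℝ :=
  Matrix.of fun i j => (M i j) ^ k

set_option maxHeartbeats 1600000 in
/-- characterization of the solutions of `Ñᵀ·Ñ_{d−1} = Ĉ` for
`Ñ = diag(ξ₁,ξ₂)·[[1,η],[θ,1]]`; here `m i j = (Ĉ⁻¹)_{i+1,j+1}`. -/
theorem stmt16 (d : ℕ) (hd : 3 ≤ d)
    (C : Matrix (Fin 2) (Fin 2) ℝ) (hC : IsUnit C.det)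
    (ξ₁ ξ₂ η θ : ℝ) (hξ₁ : ξ₁ ≠ 0) (hξ₂ : ξ₂ ≠ 0)
    (heq : (Matrix.of !![ξ₁, ξ₁ * η; ξ₂ * θ, ξ₂])ᵀ *
      entryPow (Matrix.of !![ξ₁, ξ₁ * η; ξ₂ * θ, ξ₂]) (d - 1) = C) :
    (Matrix.of !![(1 : ℝ), η ^ (d - 1); θ ^ (d - 1), 1] * C⁻¹ *
        (Matrix.of !![(1 : ℝ), η; θ, 1])ᵀ =
      Matrix.of !![(ξ₁ ^ d)⁻¹, 0; 0, (ξ₂ ^ d)⁻¹]) ∧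
    (η ^ (d - 1) * C⁻¹ 1 0 + C⁻¹ 0 0 ≠ 0 →
      θ = -(η ^ (d - 1) * C⁻¹ 1 1 + C⁻¹ 0 1) / (η ^ (d - 1) * C⁻¹ 1 0 + C⁻¹ 0 0)) ∧
    ((C⁻¹ 1 1 * η + C⁻¹ 1 0) * (-(C⁻¹ 1 0) * η ^ (d - 1) - C⁻¹ 0 0) ^ (d - 1) +
      (C⁻¹ 1 1 * η ^ (d - 1) + C⁻¹ 0 1) ^ (d - 1) * (C⁻¹ 0 1 * η + C⁻¹ 0 0) = 0) ∧
    ((ξ₁ ^ d)⁻¹ = ![(1 : ℝ), η ^ (d - 1)] ⬝ᵥ C⁻¹.mulVec ![1, η] ∧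
      (ξ₂ ^ d)⁻¹ = ![θ ^ (d - 1), (1 : ℝ)] ⬝ᵥ C⁻¹.mulVec ![θ, 1]) := by
  obtain ⟨e, rfl⟩ : ∃ e, d = e + 1 := ⟨d - 1, by omega⟩
  simp only [Nat.add_sub_cancel] at *
  set P := ξ₁ ^ (e + 1) with hPdef
  set Q := ξ₂ ^ (e + 1) with hQdef
  have hP : P ≠ 0 := pow_ne_zero _ hξ₁
  have hQ : Q ≠ 0 := pow_ne_zero _ hξ₂
  have hof : ∀ (A : Matrix (Fin 2) (Fin 2) ℝ) i j, Matrix.of A i j = A i j := fun _ _ _ => rfl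
  have hCval : C = !![P + Q * θ ^ (e+1), P * η ^ e + Q * θ;
      P * η + Q * θ ^ e, P * η ^ (e+1) + Q] := by
    rw [← heq]
    ext i j
    fin_cases i <;> fin_cases j <;>
      simp [entryPow, Matrix.mul_apply, Fin.sum_univ_two, hof] <;> ring
  subst hCval
  have hdet : (!![P + Q * θ ^ (e+1), P * η ^ e + Q * θ;
      P * η + Q * θ ^ e, P * η ^ (e+1) + Q]).det
      = P * Q * (1 - η * θ) * (1 - η ^ e * θ ^ e) := by
    rw [Matrix.det_fin_two_of]; ring
  have hdet0 : P * Q * (1 - η * θ) * (1 - η ^ e * θ ^ e) ≠ 0 := by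
    rw [← hdet]; exact hC.ne_zero
  have hu : (1 - η * θ) ≠ 0 := fun h => hdet0 (by rw [h]; ring)
  have hv : (1 - η ^ e * θ ^ e) ≠ 0 := fun h => hdet0 (by rw [h]; ring)
  set D := P * Q * (1 - η * θ) * (1 - η ^ e * θ ^ e) with hDdef
  have hD : D ≠ 0 := hdet0
  set M : Matrix (Fin 2) (Fin 2) ℝ :=
    !![(P * η ^ (e+1) + Q) / D, -(P * η ^ e + Q * θ) / D;
       -(P * η + Q * θ ^ e) / D, (P + Q * θ ^ (e+1)) / D] with hMdef
  have hinv : (!![P + Q * θ ^ (e+1), P * η ^ e + Q * θ;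
      P * η + Q * θ ^ e, P * η ^ (e+1) + Q])⁻¹ = M := by
    apply Matrix.inv_eq_right_inv
    ext i j
    fin_cases i <;> fin_cases j <;>
      simp [hMdef, Matrix.mul_apply, Fin.sum_univ_two, Matrix.one_apply] <;>
      · field_simp
        ring
  rw [hinv]
  have hM00 : M 0 0 = (P * η ^ (e+1) + Q) / D := by rw [hMdef]; simp
  have hM01 : M 0 1 = -(P * η ^ e + Q * θ) / D := by rw [hMdef]; simp
  have hM10 : M 1 0 = -(P * η + Q * θ ^ e) / D := by rw [hMdef]; simp
  have hM11 : M 1 1 = (P + Q * θ ^ (e+1)) / D := by rw [hMdef]; simp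
  refine ⟨?_, ?_, ?_, ?_, ?_⟩
  · ext i j
    fin_cases i <;> fin_cases j <;>
      simp [hMdef, Matrix.mul_apply, Fin.sum_univ_two, hof] <;>
      · field_simp
        ring
  · intro _
    have hden : η ^ e * M 1 0 + M 0 0 = 1 / (P * (1 - η * θ)) := by
      rw [hM10, hM00, hDdef]; field_simp; ring
    have hnum : η ^ e * M 1 1 + M 0 1 = -θ / (P * (1 - η * θ)) := by
      rw [hM11, hM01, hDdef]; field_simp; ring
    rw [hden, hnum]
    have hPu : P * (1 - η * θ) ≠ 0 := mul_ne_zero hP hu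
    have hu' : 1 - θ * η ≠ 0 := by rwa [mul_comm] at hu
    field_simp
  · have h1 : M 1 1 * η + M 1 0 = -θ ^ e / (P * (1 - η ^ e * θ ^ e)) := by
      rw [hM11, hM10, hDdef]; field_simp; ring
    have h2 : -(M 1 0) * η ^ e - M 0 0 = -1 / (P * (1 - η * θ)) := by
      rw [hM10, hM00, hDdef]; have hv' : 1 - θ ^ e * η ^ e ≠ 0 := by rwa [mul_comm] at hv
      field_simp; ring
    have h3 : M 1 1 * η ^ e + M 0 1 = -θ / (P * (1 - η * θ)) := by
      rw [hM11, hM01, hDdef]; field_simp; ring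
    have h4 : M 0 1 * η + M 0 0 = 1 / (P * (1 - η ^ e * θ ^ e)) := by
      rw [hM01, hM00, hDdef]; have hu' : 1 - θ * η ≠ 0 := by rwa [mul_comm] at hu
      field_simp; ring
    rw [h1, h2, h3, h4, div_pow, div_pow, neg_pow θ]
    have hPu : (P * (1 - η * θ)) ^ e ≠ 0 := pow_ne_zero _ (mul_ne_zero hP hu)
    have hPv : P * (1 - η ^ e * θ ^ e) ≠ 0 := mul_ne_zero hP hv
    field_simp
    ring
  · simp [hM00, hM01, hM10, hM11, Matrix.mulVec, dotProduct,
      Fin.sum_univ_two, hDdef]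
    field_simp
    ring
  · simp [hM00, hM01, hM10, hM11, Matrix.mulVec, dotProduct,
      Fin.sum_univ_two, hDdef]
    have hv' : 1 - θ ^ e * η ^ e ≠ 0 := by rwa [mul_comm] at hv
    field_simp
    ring

end
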